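/- Let n ≥ p ≥ 1, α = √2/2, β = 1 − √2/2, and let Y ∈ ℝ^{n×p} satisfy YᵀY = I_p. Then ∑_{u=1}^{n} ∑_{v=1}^{p} [ (I_n − β Y Yᵀ) E_{uv} Yᵀ − Y E_{uv}ᵀ (I_n − β Y Yᵀ) ] · ( E_{uv} − α Y E_{uv}ᵀ Y − β Y Yᵀ E_{uv} ) = −(n−1) Y. -/

import Mathlib

open Matrix

set_option maxHeartbeats 1600000

lemma sumEME {n p : ℕ} (M : Matrix (Fin p) (Fin n) ℝ) :
    ∑ u : Fin n, ∑ v : Fin p, Matrix.single u v (1:ℝ) * M * Matrix.single u v (1:ℝ) = Mᵀ := by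
  ext i j
  simp [Matrix.sum_apply, Matrix.mul_apply, Matrix.single, ite_and, Finset.sum_ite_eq, Finset.sum_ite_eq']

lemma sumEMEt {n p : ℕ} (M : Matrix (Fin p) (Fin p) ℝ) :
    ∑ u : Fin n, ∑ v : Fin p, Matrix.single u v (1:ℝ) * M * (Matrix.single u v (1:ℝ))ᵀ
      = (Matrix.trace M) • 1 := by
  ext i j
  simp [Matrix.sum_apply, Matrix.mul_apply, Matrix.trace, Matrix.diag, Matrix.single, ite_and,
    Finset.sum_ite_eq, Finset.sum_ite_eq', Matrix.one_apply, Matrix.transpose_apply, eq_comm]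

lemma sumEtME {n p : ℕ} (M : Matrix (Fin n) (Fin n) ℝ) :
    ∑ u : Fin n, ∑ v : Fin p, (Matrix.single u v (1:ℝ))ᵀ * M * Matrix.single u v (1:ℝ)
      = (Matrix.trace M) • 1 := by
  ext i j
  simp [Matrix.sum_apply, Matrix.mul_apply, Matrix.trace, Matrix.diag, Matrix.single, ite_and,
    Finset.sum_ite_eq, Finset.sum_ite_eq', Matrix.one_apply, Matrix.transpose_apply, eq_comm]

lemma sumEtMEt {n p : ℕ} (M : Matrix (Fin n) (Fin p) ℝ) :
    ∑ u : Fin n, ∑ v : Fin p, (Matrix.single u v (1:ℝ))ᵀ * M * (Matrix.single u v (1:ℝ))ᵀ = Mᵀ := by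
  ext i j
  simp [Matrix.sum_apply, Matrix.mul_apply, Matrix.single, ite_and, Finset.sum_ite_eq,
    Finset.sum_ite_eq', Matrix.transpose_apply]

/-- the Gaussian second-moment identity used in the strong convergence
proof of the numerical scheme, stated as a deterministic matrix identity:
`∑_{u,v} [(I - β Y Yᵀ) E_{uv} Yᵀ - Y E_{uv}ᵀ (I - β Y Yᵀ)] ·
  (E_{uv} - α Y E_{uv}ᵀ Y - β Y Yᵀ E_{uv}) = -(n-1) Y`
with `α = √2/2`, `β = 1 - √2/2`. -/
theorem second_moment_identity (n p : ℕ) (hp : 1 ≤ p) (hpn : p ≤ n)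
    (Y : Matrix (Fin n) (Fin p) ℝ) (hY : Yᵀ * Y = 1) :
    ∑ u : Fin n, ∑ v : Fin p,
      ((((1 : Matrix (Fin n) (Fin n) ℝ) - (1 - Real.sqrt 2 / 2) • (Y * Yᵀ))
          * Matrix.single u v (1 : ℝ) * Yᵀ
        - Y * (Matrix.single u v (1 : ℝ))ᵀ
          * ((1 : Matrix (Fin n) (Fin n) ℝ) - (1 - Real.sqrt 2 / 2) • (Y * Yᵀ)))
      * (Matrix.single u v (1 : ℝ)
        - (Real.sqrt 2 / 2) • (Y * (Matrix.single u v (1 : ℝ))ᵀ * Y)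
        - (1 - Real.sqrt 2 / 2) • (Y * Yᵀ * Matrix.single u v (1 : ℝ))))
    = (-((n : ℝ) - 1)) • Y := by
  set α : ℝ := Real.sqrt 2 / 2 with hα
  set β : ℝ := 1 - Real.sqrt 2 / 2 with hβ
  set Q : Matrix (Fin n) (Fin n) ℝ := (1 : Matrix (Fin n) (Fin n) ℝ) - β • (Y * Yᵀ) with hQ
  set E : Fin n → Fin p → Matrix (Fin n) (Fin p) ℝ := fun u v => Matrix.single u v (1:ℝ) with hE
  have key : ∀ (u : Fin n) (v : Fin p),
      (Q * E u v * Yᵀ - Y * (E u v)ᵀ * Q)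
        * (E u v - α • (Y * (E u v)ᵀ * Y) - β • (Y * Yᵀ * E u v))
      = Q * (E u v * Yᵀ * E u v)
        - α • (Q * (E u v * (Yᵀ * Y) * (E u v)ᵀ) * Y)
        - β • (Q * (E u v * (Yᵀ * (Y * Yᵀ)) * E u v))
        - Y * ((E u v)ᵀ * Q * E u v)
        + α • (Y * ((E u v)ᵀ * (Q * Y) * (E u v)ᵀ) * Y)
        + β • (Y * ((E u v)ᵀ * (Q * (Y * Yᵀ)) * E u v)) := by
    intro u v
    simp only [Matrix.sub_mul, Matrix.mul_sub, Matrix.mul_smul, Matrix.smul_mul, smul_sub, Matrix.mul_assoc]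
    abel
  rw [Finset.sum_congr rfl fun u _ => Finset.sum_congr rfl fun v _ => key u v]
  simp only [Finset.sum_add_distrib, Finset.sum_sub_distrib, ← Finset.smul_sum,
    ← Matrix.mul_sum, ← Matrix.sum_mul]
  rw [sumEME, sumEMEt, sumEME, sumEtME, sumEtMEt, sumEtME]
  have hYY : Y * Yᵀ * Y = Y := by rw [Matrix.mul_assoc, hY, Matrix.mul_one]
  have htr : Matrix.trace (Yᵀ * Y) = (p : ℝ) := by rw [hY, Matrix.trace_one]; simp
  have htr' : Matrix.trace (Y * Yᵀ) = (p : ℝ) := by rw [Matrix.trace_mul_comm, htr]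
  have hQY : Q * Y = (1 - β) • Y := by
    rw [hQ, Matrix.sub_mul, Matrix.one_mul, Matrix.smul_mul, hYY, hβ]; module
  have hQP : Q * (Y * Yᵀ) = (1 - β) • (Y * Yᵀ) := by
    rw [hQ, Matrix.sub_mul, Matrix.one_mul, Matrix.smul_mul, ← Matrix.mul_assoc, hYY, hβ]; module
  have htrQ : Matrix.trace Q = (n : ℝ) - β * p := by
    rw [hQ, Matrix.trace_sub, Matrix.trace_smul, Matrix.trace_one, htr']; simp
  have htrQP : Matrix.trace (Q * (Y * Yᵀ)) = (1 - β) * p := by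
    rw [hQP, Matrix.trace_smul, htr']; simp
  rw [htr, htrQ, htrQP]
  have h1 : (Yᵀ)ᵀ = Y := transpose_transpose Y
  have h2 : (Yᵀ * (Y * Yᵀ))ᵀ = Y := by
    rw [transpose_mul, transpose_mul, h1]; exact hYY
  have h3 : (Q * Y)ᵀ = (1 - β) • Yᵀ := by rw [hQY, Matrix.transpose_smul]
  rw [h1, h2, h3, hQY]
  have h4 : Y * ((1 - β) • Yᵀ) * Y = (1 - β) • Y := by
    rw [Matrix.mul_smul, Matrix.smul_mul, Matrix.mul_assoc, hY, Matrix.mul_one]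
  rw [h4]
  have h5 : Q * ((p : ℝ) • (1 : Matrix (Fin n) (Fin n) ℝ)) * Y = (p : ℝ) • ((1 - β) • Y) := by
    rw [Matrix.mul_smul, Matrix.mul_one, Matrix.smul_mul, hQY]
  rw [h5]
  have h6 : Y * (((n : ℝ) - β * p) • (1 : Matrix (Fin p) (Fin p) ℝ))
      = ((n : ℝ) - β * p) • Y := by rw [Matrix.mul_smul, Matrix.mul_one]
  rw [h6]
  have h7 : Y * (((1 - β) * p) • (1 : Matrix (Fin p) (Fin p) ℝ))
      = ((1 - β) * p) • Y := by rw [Matrix.mul_smul, Matrix.mul_one]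
  rw [h7]
  have hs : Real.sqrt 2 * Real.sqrt 2 = 2 := Real.mul_self_sqrt (by norm_num)
  simp only [smul_smul, ← sub_smul, ← add_smul]
  congr 1
  rw [hα, hβ]
  linear_combination ((1 - (p : ℝ)) / 2) * hs
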